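/- Let U be a positive integer and for each coordinate u in {1,...,U}, let μ_u : ℕ → [0,1] be a non-decreasing function. Define h : ℕ^U → ℝ by h(x) = ∏_{u=1}^U (1 - μ_u(x_u)). Then for any x ∈ ℕ^U and any distinct indices l, j, we have h(x) - h(x + χ_l) ≥ h(x + χ_j) - h(x + χ_l + χ_j), where χ_i denotes the i-th standard unit vector. -/
import Mathlib


theorem stmt_0 (U : ℕ) (hU : 0 < U) (μ : Fin U → ℕ → ℝ)
    (hμ0 : ∀ u n, 0 ≤ μ u n) (hμ1 : ∀ u n, μ u n ≤ 1)
    (hmono : ∀ u, Monotone (μ u))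
    (h : (Fin U → ℕ) → ℝ)
    (hdef : ∀ x, h x = ∏ u, (1 - μ u (x u)))
    (x : Fin U → ℕ) (l j : Fin U) (hlj : l ≠ j) :
    h x - h (x + Pi.single l 1) ≥
      h (x + Pi.single j 1) - h (x + Pi.single l 1 + Pi.single j 1) := by
  set s := Finset.univ.erase l with hs
  have hsplit : ∀ y : Fin U → ℕ,
      h y = (1 - μ l (y l)) * ∏ u ∈ s, (1 - μ u (y u)) := by
    intro y
    rw [hdef, ← Finset.mul_prod_erase _ _ (Finset.mem_univ l)]
  -- pointwise evaluations
  have e1 : ∀ u ∈ s, ((x + Pi.single l 1 : Fin U → ℕ) u) = x u := by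
    intro u hu
    have : u ≠ l := Finset.ne_of_mem_erase hu
    simp [Pi.single_apply, this]
  have e2 : ((x + Pi.single l 1 : Fin U → ℕ) l) = x l + 1 := by simp
  have e3 : ((x + Pi.single j 1 : Fin U → ℕ) l) = x l := by
    simp [Pi.single_apply, hlj.symm, (Ne.symm hlj)]
  have e4 : ((x + Pi.single l 1 + Pi.single j 1 : Fin U → ℕ) l) = x l + 1 := by
    simp [Pi.single_apply, (Ne.symm hlj)]
  have e5 : ∀ u ∈ s, ((x + Pi.single l 1 + Pi.single j 1 : Fin U → ℕ) u) = ((x + Pi.single j 1 : Fin U → ℕ) u) := by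
    intro u hu
    have : u ≠ l := Finset.ne_of_mem_erase hu
    simp [Pi.single_apply, this]
  set P := ∏ u ∈ s, (1 - μ u (x u)) with hP
  set Q := ∏ u ∈ s, (1 - μ u (((x + Pi.single j 1 : Fin U → ℕ) u))) with hQ
  have hA : 0 ≤ μ l (x l + 1) - μ l (x l) := by
    have := hmono l (Nat.le_succ (x l)); linarith
  have hQP : Q ≤ P := by
    apply Finset.prod_le_prod
    · intro u _
      have := hμ1 u (((x + Pi.single j 1 : Fin U → ℕ) u)); linarith
    · intro u _
      have hle : x u ≤ ((x + Pi.single j 1 : Fin U → ℕ) u) := by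
        simp [Pi.single_apply]
      have := hmono u hle; linarith
  have hQ0 : 0 ≤ Q := by
    apply Finset.prod_nonneg
    intro u _
    have := hμ1 u (((x + Pi.single j 1 : Fin U → ℕ) u)); linarith
  have pL : ∏ u ∈ s, (1 - μ u ((x + Pi.single l 1 : Fin U → ℕ) u)) = P :=
    Finset.prod_congr rfl (fun u hu => by rw [e1 u hu])
  have hL : h x - h (x + Pi.single l 1) = (μ l (x l + 1) - μ l (x l)) * P := by
    rw [hsplit x, hsplit (x + Pi.single l 1), e2, pL]
    ring
  have hR : h (x + Pi.single j 1) - h (x + Pi.single l 1 + Pi.single j 1)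
      = (μ l (x l + 1) - μ l (x l)) * Q := by
    have pR : ∏ u ∈ s, (1 - μ u ((x + Pi.single l 1 + Pi.single j 1 : Fin U → ℕ) u)) = Q :=
      Finset.prod_congr rfl (fun u hu => by rw [e5 u hu])
    rw [hsplit (x + Pi.single j 1), hsplit (x + Pi.single l 1 + Pi.single j 1), e3, e4, pR]
    ring
  rw [ge_iff_le, hL, hR]
  exact mul_le_mul_of_nonneg_left hQP hA
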